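/- In a k-meridional coloring of a Gauss diagram D that is not cut-split, for each color class, the set of strands of that color, ordered by adjacency, is colored in an order such that starting from the seed strand the coloring proceeds outward: each newly colored strand of the class is adjacent to the previously colored connected block. -/

import Mathlib

/-- An abstract Gauss diagram: a finite collection of circles, each circle `c`
carrying `heads c` arrowheads which divide it into `heads c` strands (in cyclic
order); each chord has its arrowhead at one of these positions (bijectively),
its arrowtail on some strand, and a sign. -/
structure GaussDiagram where
  circles : ℕ
  heads : Fin circles → ℕ
  chords : ℕ
  headPos : Fin chords → (c : Fin circles) × Fin (heads c)
  headBij : Function.Bijective headPos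
  tail : Fin chords → (c : Fin circles) × Fin (heads c)
  sign : Fin chords → Bool

namespace GaussDiagram

variable (D : GaussDiagram)

/-- A strand: the arc of circle `c` beginning just after arrowhead `i`. -/
abbrev Strand := (c : Fin D.circles) × Fin (D.heads c)

noncomputable def nStrands : ℕ := Nat.card D.Strand

/-- The next strand along the circle (across one arrowhead). -/
def next (s : D.Strand) : D.Strand :=
  ⟨s.1, ⟨(s.2.val + 1) % D.heads s.1, Nat.mod_lt _ (Nat.lt_of_le_of_lt (Nat.zero_le _) s.2.isLt)⟩⟩

/-- The strand on one side of the arrowhead of chord `p`. -/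
def src (p : Fin D.chords) : D.Strand := D.headPos p
/-- The strand on the other side of the arrowhead of chord `p`. -/
def dst (p : Fin D.chords) : D.Strand := D.next (D.src p)

/-- Two strands are adjacent if they are separated by an arrowhead. -/
def Adjacent (s t : D.Strand) : Prop :=
  ∃ p : Fin D.chords, (D.src p = s ∧ D.dst p = t) ∨ (D.src p = t ∧ D.dst p = s)

/-- An overbridge is a strand containing at least one arrowtail. -/
def IsOverbridge (s : D.Strand) : Prop := ∃ p : Fin D.chords, D.tail p = s

/-- The bridge number of the diagram: the number of overbridges. -/
noncomputable def vb : ℕ := Nat.card {s : D.Strand // D.IsOverbridge s}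

/-- Cut-split: some circle has no chords, or two strands adjacent at an
arrowhead coincide. -/
def CutSplit : Prop :=
  (∃ c : Fin D.circles, D.heads c = 0) ∨ ∃ p : Fin D.chords, D.src p = D.dst p

/-- A `k`-meridional coloring of `D`, recorded by its coloring sequence:
`seq` enumerates the strands in the order they are colored, the first `k` being
the seed strands (with the `k` distinct colors `0, …, k-1`), and each later
strand receives its color through a coloring move: there is a chord `p` whose
arrowhead separates it from a previously colored strand of the same color, and
whose arrowtail lies on a previously colored strand. -/
structure MerColoring (k : ℕ) where
  seq : Fin D.nStrands → D.Strand
  bij : Function.Bijective seq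
  col : Fin D.nStrands → Fin k
  seed_col : ∀ (i : Fin D.nStrands) (h : i.val < k), col i = ⟨i.val, h⟩
  move : ∀ i : Fin D.nStrands, k ≤ i.val →
    ∃ (p : Fin D.chords) (l r : Fin D.nStrands), l < i ∧ r < i ∧
      ((D.src p = seq l ∧ D.dst p = seq i) ∨ (D.src p = seq i ∧ D.dst p = seq l)) ∧
      D.tail p = seq r ∧ col i = col l

variable {D}

/-- The position of a strand in the coloring sequence. -/
noncomputable def MerColoring.idx {k : ℕ} (mc : D.MerColoring k) (s : D.Strand) :
    Fin D.nStrands :=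
  (Equiv.ofBijective mc.seq mc.bij).symm s

/-- The height function `h(α_j) = 1/(j+1)` (zero-indexed: `1/(j+2)`). -/
noncomputable def MerColoring.height {k : ℕ} (mc : D.MerColoring k) (s : D.Strand) : ℚ :=
  1 / ((mc.idx s : ℕ) + 2)

/-- The final color of a strand. -/
noncomputable def MerColoring.colorOf {k : ℕ} (mc : D.MerColoring k) (s : D.Strand) : Fin k :=
  mc.col (mc.idx s)

variable (D)

/-- The Wirtinger number: the least `k` for which `D` is `k`-meridionally
colorable. -/
noncomputable def wirt : ℕ := sInf {k | Nonempty (D.MerColoring k)}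

/-- A single coloring move on partial colorings: extend a color across the
arrowhead of a chord whose arrowtail lies on an already colored strand. -/
def ColoringMove {k : ℕ} (f g : D.Strand → Option (Fin k)) : Prop :=
  ∃ (p : Fin D.chords) (ap aq : D.Strand),
    ((D.src p = ap ∧ D.dst p = aq) ∨ (D.src p = aq ∧ D.dst p = ap)) ∧
    (f (D.tail p)).isSome ∧ (f ap).isSome ∧ f aq = none ∧
    g = Function.update f aq (f ap)

/-- A set of strands is connected if any two of its members are joined by a
path of adjacent strands inside the set. -/
def ConnectedStrands (A : Set D.Strand) : Prop :=
  ∀ s ∈ A, ∀ t ∈ A,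
    Relation.ReflTransGen (fun x y => x ∈ A ∧ y ∈ A ∧ D.Adjacent x y) s t

end GaussDiagram

open GaussDiagram in
/-- In a `k`-meridional coloring of a Gauss diagram that is not cut-split, the
coloring of each color class proceeds outward from the seed: at every stage the
colored portion of each color class is a connected block of consecutive strands
containing the seed strand of that color, and each newly colored strand is
adjacent to a previously colored strand of the same color. -/
theorem color_class_interval_from_seed (D : GaussDiagram) (hns : ¬ D.CutSplit)
    (k : ℕ) (hk : k ≤ D.nStrands) (mc : D.MerColoring k) :
    (∀ (t : ℕ) (μ : Fin k),
      D.ConnectedStrands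
        {s : D.Strand | ∃ i : Fin D.nStrands, i.val < t ∧ mc.seq i = s ∧ mc.col i = μ}) ∧
    (∀ (μ : Fin k) (t : ℕ), k ≤ t →
      mc.seq ⟨μ.val, lt_of_lt_of_le μ.isLt hk⟩ ∈
        {s : D.Strand | ∃ i : Fin D.nStrands, i.val < t ∧ mc.seq i = s ∧ mc.col i = μ}) ∧
    (∀ i : Fin D.nStrands, k ≤ i.val →
      ∃ l : Fin D.nStrands, l < i ∧ mc.col l = mc.col i ∧
        D.Adjacent (mc.seq l) (mc.seq i)) := by
  classical
  have key : ∀ i : Fin D.nStrands, k ≤ i.val →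
      ∃ l : Fin D.nStrands, l < i ∧ mc.col l = mc.col i ∧
        D.Adjacent (mc.seq l) (mc.seq i) := by
    intro i hi
    obtain ⟨p, l, r, hl, hr, hor, htail, hcol⟩ := mc.move i hi
    exact ⟨l, hl, hcol.symm, ⟨p, hor⟩⟩
  have adj_symm : ∀ s t, D.Adjacent s t → D.Adjacent t s := by
    rintro s t ⟨p, hp⟩
    exact ⟨p, hp.symm⟩
  refine ⟨?_, ?_, key⟩
  · intro t μ
    set A : ℕ → Set D.Strand :=
      fun t => {s : D.Strand | ∃ i : Fin D.nStrands, i.val < t ∧ mc.seq i = s ∧ mc.col i = μ}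
      with hA
    show D.ConnectedStrands (A t)
    have mono : ∀ (B C : Set D.Strand), B ⊆ C → ∀ s u,
        Relation.ReflTransGen (fun x y => x ∈ B ∧ y ∈ B ∧ D.Adjacent x y) s u →
        Relation.ReflTransGen (fun x y => x ∈ C ∧ y ∈ C ∧ D.Adjacent x y) s u := by
      intro B C hBC s u h
      exact Relation.ReflTransGen.mono (r := fun x y => x ∈ B ∧ y ∈ B ∧ D.Adjacent x y)
        (p := fun x y => x ∈ C ∧ y ∈ C ∧ D.Adjacent x y)
        (fun x y hxy => ⟨hBC hxy.1, hBC hxy.2.1, hxy.2.2⟩) s u h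
    induction t with
    | zero =>
      intro s hs
      obtain ⟨i, hi, -⟩ := hs
      exact absurd hi (Nat.not_lt_zero _)
    | succ t ih =>
      have hsub : A t ⊆ A (t+1) := by
        rintro s ⟨i, hi, h1, h2⟩
        exact ⟨i, Nat.lt_succ_of_lt hi, h1, h2⟩
      by_cases htn : t < D.nStrands
      · by_cases htk : k ≤ t
        · -- main case
          set rel' : D.Strand → D.Strand → Prop :=
            fun x y => x ∈ A (t+1) ∧ y ∈ A (t+1) ∧ D.Adjacent x y with hrel
          have hsymm : Symmetric rel' := by
            rintro x y ⟨h1, h2, h3⟩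
            exact ⟨h2, h1, adj_symm _ _ h3⟩
          have hstep : ∀ s ∈ A (t+1), ∃ s', s' ∈ A t ∧
              Relation.ReflTransGen rel' s s' := by
            rintro s ⟨i, hi, hseq, hcol⟩
            by_cases hit : i.val < t
            · exact ⟨s, ⟨i, hit, hseq, hcol⟩, Relation.ReflTransGen.refl⟩
            · have hieq : i.val = t := Nat.le_antisymm (Nat.lt_succ_iff.mp hi) (Nat.le_of_not_lt hit)
              obtain ⟨l, hl, hlc, hadj⟩ := key i (hieq ▸ htk)
              have hlt : l.val < t := hieq ▸ hl
              have hlA : mc.seq l ∈ A t := ⟨l, hlt, rfl, hlc.trans hcol⟩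
              refine ⟨mc.seq l, hlA, Relation.ReflTransGen.single ?_⟩
              exact ⟨⟨i, hi, hseq, hcol⟩, hsub hlA, hseq ▸ adj_symm _ _ hadj⟩
          intro s hs u hu
          obtain ⟨s', hs', hps⟩ := hstep s hs
          obtain ⟨u', hu', hpu⟩ := hstep u hu
          have hmid : Relation.ReflTransGen rel' s' u' :=
            mono (A t) (A (t+1)) hsub _ _ (ih s' hs' u' hu')
          exact (hps.trans hmid).trans ((@Relation.ReflTransGen.symmetric _ rel' ⟨fun a b h => hsymm h⟩).symm _ _ hpu)
        · -- t + 1 ≤ k : at most one element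
          intro s hs u hu
          obtain ⟨i, hi, hiseq, hicol⟩ := hs
          obtain ⟨j, hj, hjseq, hjcol⟩ := hu
          have hik : i.val < k := Nat.lt_of_lt_of_le hi (Nat.succ_le_of_lt (Nat.lt_of_not_le htk))
          have hjk : j.val < k := Nat.lt_of_lt_of_le hj (Nat.succ_le_of_lt (Nat.lt_of_not_le htk))
          have h1 := mc.seed_col i hik
          have h2 := mc.seed_col j hjk
          have : i = j := by
            have hval : (⟨i.val, hik⟩ : Fin k) = ⟨j.val, hjk⟩ := by
              rw [← h1, ← h2, hicol, hjcol]
            exact Fin.ext (Fin.mk.inj_iff.mp hval)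
          subst this
          rw [← hiseq, ← hjseq]
      · -- t ≥ nStrands : A (t+1) = A t
        have heq : A (t+1) = A t := by
          ext s
          constructor
          · rintro ⟨i, hi, h1, h2⟩
            exact ⟨i, Nat.lt_of_lt_of_le i.isLt (Nat.le_of_not_lt htn), h1, h2⟩
          · exact fun h => hsub h
        rw [heq]
        exact ih
  · intro μ t ht
    refine ⟨⟨μ.val, lt_of_lt_of_le μ.isLt hk⟩, lt_of_lt_of_le μ.isLt ht, rfl, ?_⟩
    have := mc.seed_col ⟨μ.val, lt_of_lt_of_le μ.isLt hk⟩ μ.isLt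
    simpa using this
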